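/- Let a^-, a^+, b^-, b^+ be real numbers with a^± > 0, and let λ^± be reals. Let σ_l ≤ 0, σ_r ≥ 0 with σ_r > σ_l, σ_r ≥ λ^±, and σ̂ ≥ σ_r. Suppose -b^- > -λ^-·a^- and -b^+ > -λ^+·a^+. Then -(σ_r b^- - σ_l b^+ + σ_l σ_r(a^+ - a^-))/(σ_r - σ_l) > -σ̂·a^-. -/
import Mathlib


/-- Abstract HLL flux PCP estimate: projections of the HLL flux onto a linear constraint
functional are controlled by the maximal wave speed. -/
theorem hll_projection_bound
    (am ap bm bp lamm lamp σl σr σhat : ℝ)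
    (ham : 0 < am) (hap : 0 < ap)
    (hσl : σl ≤ 0) (hσr : 0 ≤ σr) (hlr : σl < σr)
    (hσrm : lamm ≤ σr) (hσrp : lamp ≤ σr) (hσhat : σr ≤ σhat)
    (hbm : -lamm * am < -bm) (hbp : -lamp * ap < -bp) :
    -σhat * am < -((σr * bm - σl * bp + σl * σr * (ap - am)) / (σr - σl)) := by
  have hd : 0 < σr - σl := by linarith
  rw [← neg_div, lt_div_iff₀ hd]
  have h1 : -σr * am < -bm := by nlinarith
  have h2 : -σr * ap < -bp := by nlinarith
  rcases lt_or_eq_of_le hσr with h | h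
  · nlinarith [mul_pos h (sub_pos.mpr hlr), mul_le_mul_of_nonneg_right hσhat (le_of_lt ham), mul_lt_mul_of_pos_left h1 h, mul_le_mul_of_nonpos_left (le_of_lt h2) hσl]
  · have hσl' : σl < 0 := by linarith
    nlinarith [mul_lt_mul_of_neg_left h2 hσl', mul_le_mul_of_nonneg_right hσhat (le_of_lt ham)]
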